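/- If X is connected, locally path connected, and a strong H-SLT space at x₀ for some subgroup H of π₁(X,x₀), and K is an open subgroup of the quasitopological fundamental group π₁^{qtop}(X,x₀) containing H, then there exists an open cover 𝒰 of X whose Spanier group π(𝒰,x₀) is contained in K. -/

import Mathlib

open CategoryTheory unitInterval
open scoped Topology

attribute [local instance] Path.Homotopic.setoid

noncomputable section

/-- The homotopy class of a loop as an element of the fundamental group. -/
def loopClass {X : Type*} [TopologicalSpace X] {x : X} (γ : Path x x) :
    FundamentalGroup X x :=
  (⟦γ⟧ : Path.Homotopic.Quotient x x)

variable {X : Type*} [TopologicalSpace X]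

/-- The Spanier group of a family of subsets of `X`, based at `x`: the subgroup generated by
classes `[α∗β∗α⁻¹]` where `α` is a path from `x` and `β` is a loop inside a member of `𝒰`. -/
def spanierGroupAt (x : X) (𝒰 : Set (Set X)) : Subgroup (FundamentalGroup X x) :=
  Subgroup.closure {g | ∃ (y : X) (α : Path x y) (β : Path y y) (U : Set X),
    U ∈ 𝒰 ∧ (∀ t, β t ∈ U) ∧ g = loopClass (α.trans (β.trans α.symm))}

/-- `𝒰` is an open cover of `X`. -/
def IsOpenCover (𝒰 : Set (Set X)) : Prop := (∀ U ∈ 𝒰, IsOpen U) ∧ ⋃₀ 𝒰 = Set.univ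

/-- `X` is a strong `H`-SLT space at `x₀`: for every `x ∈ X` and every open neighborhood `U`
of `x₀` there is an open neighborhood `V` of `x` such that for every loop `β` in `V` based at
`x` and every path `α` from `x₀` to `x` there is a loop `λ` in `U` based at `x₀` with
`[α∗β∗α⁻¹∗λ⁻¹] ∈ H`. -/
def StrongHSLTAt (x₀ : X) (H : Subgroup (FundamentalGroup X x₀)) : Prop :=
  ∀ (x : X) (U : Set X), IsOpen U → x₀ ∈ U →
    ∃ V : Set X, IsOpen V ∧ x ∈ V ∧
      ∀ (β : Path x x), (∀ t, β t ∈ V) → ∀ (α : Path x₀ x),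
        ∃ lam : Path x₀ x₀, (∀ t, lam t ∈ U) ∧
          loopClass (α.trans (β.trans α.symm)) * (loopClass lam)⁻¹ ∈ H

/-- The quotient topology on the fundamental group induced by the compact-open topology on
the loop space, i.e. the topology of the quasitopological fundamental group `π₁^qtop`. -/
def qtop (x₀ : X) : TopologicalSpace (FundamentalGroup X x₀) :=
  TopologicalSpace.coinduced (fun γ : Path x₀ x₀ => loopClass γ) inferInstance

/-! ### Auxiliary lemmas -/

lemma aux_exists_nbhd_CM {Y : Type*} [TopologicalSpace Y] {y₀ : Y}
    {W : Set C(unitInterval, Y)} (hW : IsOpen W) {f₀ : C(unitInterval, Y)}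
    (hf₀ : f₀ ∈ W) (hc : ∀ t, f₀ t = y₀) :
    ∃ U : Set Y, IsOpen U ∧ y₀ ∈ U ∧ ∀ f : C(unitInterval, Y), (∀ t, f t ∈ U) → f ∈ W := by
  classical
  have hbasis := TopologicalSpace.isTopologicalBasis_of_subbasis
    (ContinuousMap.compactOpen_eq (X := unitInterval) (Y := Y))
  obtain ⟨b, ⟨F, ⟨hFfin, hFsub⟩, rfl⟩, hfb, hbW⟩ :=
    hbasis.exists_subset_of_mem_open hf₀ hW
  have hch : ∀ s : Set C(unitInterval, Y), ∃ KU : Set unitInterval × Set Y,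
      s ∈ F → IsCompact KU.1 ∧ IsOpen KU.2 ∧
        s = {f : C(unitInterval, Y) | Set.MapsTo f KU.1 KU.2} := by
    intro s
    by_cases hs : s ∈ F
    · obtain ⟨K, hK, U, hU, rfl⟩ := hFsub hs
      exact ⟨(K, U), fun _ => ⟨hK, hU, rfl⟩⟩
    · exact ⟨(∅, ∅), fun h => absurd h hs⟩
  choose KU hKU using hch
  set O : Set C(unitInterval, Y) → Set Y :=
    fun s => if (KU s).1.Nonempty then (KU s).2 else Set.univ with hO
  refine ⟨⋂ s ∈ F, O s, ?_, ?_, ?_⟩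
  · exact hFfin.isOpen_biInter fun s hs => by
      by_cases hne : (KU s).1.Nonempty
      · simp only [hO, if_pos hne]; exact ((hKU s hs).2.1)
      · simp only [hO, if_neg hne]; exact isOpen_univ
  · refine Set.mem_biInter fun s hs => ?_
    by_cases hne : (KU s).1.Nonempty
    · simp only [hO, if_pos hne]
      obtain ⟨t, ht⟩ := hne
      have hf₀s : f₀ ∈ s := hfb s hs
      rw [(hKU s hs).2.2] at hf₀s
      have := hf₀s ht
      rwa [hc t] at this
    · simp only [hO, if_neg hne]; trivial
  · intro f hf
    refine hbW (Set.mem_sInter.2 fun s hs => ?_)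
    rw [(hKU s hs).2.2]
    intro t htK
    have hne : (KU s).1.Nonempty := ⟨t, htK⟩
    have hfO : f t ∈ O s := Set.mem_iInter₂.1 (hf t) s hs
    simpa only [hO, if_pos hne] using hfO

lemma aux_exists_nbhd_path {x₀ : X} {W : Set (Path x₀ x₀)} (hW : IsOpen W)
    (hrefl : Path.refl x₀ ∈ W) :
    ∃ U : Set X, IsOpen U ∧ x₀ ∈ U ∧ ∀ γ : Path x₀ x₀, (∀ t, γ t ∈ U) → γ ∈ W := by
  rw [isOpen_induced_iff] at hW
  obtain ⟨W', hW', rfl⟩ := hW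
  obtain ⟨U, hUo, hx₀U, hU⟩ := aux_exists_nbhd_CM (y₀ := x₀) hW'
    (f₀ := (Path.refl x₀ : C(unitInterval, X))) hrefl (fun t => rfl)
  exact ⟨U, hUo, hx₀U, fun γ hγ => hU _ hγ⟩

lemma aux_trans_mem {x y z : X} {S : Set X} {p : Path x y} {q : Path y z}
    (hp : ∀ t, p t ∈ S) (hq : ∀ t, q t ∈ S) : ∀ t, p.trans q t ∈ S := by
  intro t
  rw [Path.trans_apply]
  split_ifs
  · exact hp _
  · exact hq _

lemma aux_symm_mem {x y : X} {S : Set X} {p : Path x y}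
    (hp : ∀ t, p t ∈ S) : ∀ t, p.symm t ∈ S := fun t => hp _

lemma aux_loopClass_refl (x : X) : loopClass (Path.refl x) = (1 : FundamentalGroup X x) :=
  rfl

lemma aux_quot_conj_eq {x₀ x y : X} (α : Path x₀ y) (β : Path y y) (δ : Path x y) :
    (⟦(α.trans δ.symm).trans ((δ.trans (β.trans δ.symm)).trans (α.trans δ.symm).symm)⟧ :
        Path.Homotopic.Quotient x₀ x₀) = ⟦α.trans (β.trans α.symm)⟧ := by
  rw [Path.trans_symm, Path.symm_symm]
  have hc : ∀ {z : X} (r : Path.Homotopic.Quotient y z),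
      Path.Homotopic.Quotient.trans (Path.Homotopic.Quotient.symm (Path.Homotopic.Quotient.mk δ))
        (Path.Homotopic.Quotient.trans (Path.Homotopic.Quotient.mk δ) r) = r := by
    intro z r
    rw [← Path.Homotopic.Quotient.trans_assoc, Path.Homotopic.Quotient.symm_trans,
      Path.Homotopic.Quotient.refl_trans]
  change Path.Homotopic.Quotient.mk _ = Path.Homotopic.Quotient.mk _
  simp only [Path.Homotopic.Quotient.mk_trans, Path.Homotopic.Quotient.mk_symm,
    Path.Homotopic.Quotient.trans_assoc, hc]

lemma aux_loopClass_congr {x : X} {γ γ' : Path x x}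
    (h : (⟦γ⟧ : Path.Homotopic.Quotient x x) = ⟦γ'⟧) : loopClass γ = loopClass γ' := by
  unfold loopClass; rw [h]

theorem strong_HSLT_exists_spanier_subgroup
    {X : Type*} [TopologicalSpace X] [ConnectedSpace X] [LocallyPathConnectedSpace X]
    (x₀ : X) (H K : Subgroup (FundamentalGroup X x₀))
    (hX : StrongHSLTAt x₀ H) (hHK : H ≤ K)
    (hK : IsOpen[qtop x₀] (K : Set (FundamentalGroup X x₀))) :
    ∃ 𝒰 : Set (Set X), IsOpenCover 𝒰 ∧ spanierGroupAt x₀ 𝒰 ≤ K := by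
  classical
  unfold qtop at hK
  rw [isOpen_coinduced] at hK
  have hreflW : Path.refl x₀ ∈ (fun γ : Path x₀ x₀ => loopClass γ) ⁻¹' (K : Set _) := by
    simp only [Set.mem_preimage, aux_loopClass_refl, SetLike.mem_coe]
    exact K.one_mem
  obtain ⟨U, hUo, hx₀U, hU⟩ := aux_exists_nbhd_path hK hreflW
  choose V hVo hxV hV using fun x => hX x U hUo hx₀U
  refine ⟨{S | ∃ x : X, S = pathComponentIn (V x) x}, ⟨?_, ?_⟩, ?_⟩
  · rintro S ⟨x, rfl⟩
    exact (hVo x).pathComponentIn x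
  · refine Set.eq_univ_of_forall fun x => ?_
    exact ⟨pathComponentIn (V x) x, ⟨x, rfl⟩, mem_pathComponentIn_self (hxV x)⟩
  · rw [spanierGroupAt, Subgroup.closure_le]
    rintro g ⟨y, α, β, S, ⟨x, rfl⟩, hβ, rfl⟩
    -- y is in the path component of x in V x, get a path δ from x to y inside V x
    have hy : y ∈ pathComponentIn (V x) x := by
      have := hβ 0
      rwa [β.source] at this
    obtain ⟨δ, hδ⟩ : JoinedIn (V x) x y := hy
    have hβV : ∀ t, β t ∈ V x := fun t => pathComponentIn_subset (hβ t)
    set β' : Path x x := δ.trans (β.trans δ.symm) with hβ'def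
    have hβ'V : ∀ t, β' t ∈ V x :=
      aux_trans_mem hδ (aux_trans_mem hβV (aux_symm_mem hδ))
    obtain ⟨lam, hlamU, hmem⟩ := hV x β' hβ'V (α.trans δ.symm)
    have hlamK : loopClass lam ∈ K := hU lam hlamU
    have hgen : loopClass ((α.trans δ.symm).trans (β'.trans (α.trans δ.symm).symm)) ∈ K := by
      have h1 : loopClass ((α.trans δ.symm).trans (β'.trans (α.trans δ.symm).symm)) =
          (loopClass ((α.trans δ.symm).trans (β'.trans (α.trans δ.symm).symm)) *
            (loopClass lam)⁻¹) * loopClass lam := by group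
      rw [h1]
      exact K.mul_mem (hHK hmem) hlamK
    have heq : loopClass ((α.trans δ.symm).trans (β'.trans (α.trans δ.symm).symm)) =
        loopClass (α.trans (β.trans α.symm)) :=
      aux_loopClass_congr (aux_quot_conj_eq α β δ)
    rw [← heq]
    exact hgen

end
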